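/- For every prime ideal P of A not containing f^{-1}(J), the localization of A⋈^f J at the prime ideal P'^f := {(p, f(p)+j) : p ∈ P, j ∈ J} is canonically isomorphic, as a ring, to the localization A_P of A at P; the isomorphism is induced by the projection p_A : A⋈^f J → A. -/

import Mathlib

section Amalgamation

variable {A B : Type*} [CommRing A] [CommRing B]

/-- The amalgamation `A ⋈^f J` of `A` with `B` along the ideal `J` of `B` with respect to
the ring homomorphism `f : A → B`, realized as the subring
`{(a, f a + j) | a ∈ A, j ∈ J}` of `A × B`. -/
def amalg (f : A →+* B) (J : Ideal B) : Subring (A × B) where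
  carrier := {x : A × B | x.2 - f x.1 ∈ J}
  zero_mem' := by simp
  one_mem' := by simp
  add_mem' := by
    intro x y hx hy
    simp only [Set.mem_setOf_eq, Prod.fst_add, Prod.snd_add, map_add] at *
    have h : x.2 + y.2 - (f x.1 + f y.1) = x.2 - f x.1 + (y.2 - f y.1) := by ring
    rw [h]; exact J.add_mem hx hy
  neg_mem' := by
    intro x hx
    simp only [Set.mem_setOf_eq, Prod.fst_neg, Prod.snd_neg, map_neg] at *
    have h : -x.2 - -f x.1 = -(x.2 - f x.1) := by ring
    rw [h]; exact J.neg_mem hx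
  mul_mem' := by
    intro x y hx hy
    simp only [Set.mem_setOf_eq, Prod.fst_mul, Prod.snd_mul, map_mul] at *
    have h : x.2 * y.2 - f x.1 * f y.1 = x.2 * (y.2 - f y.1) + (x.2 - f x.1) * f y.1 := by ring
    rw [h]
    exact J.add_mem (J.mul_mem_left _ hy) (J.mul_mem_right _ hx)

lemma mem_amalg_iff (f : A →+* B) (J : Ideal B) (x : A × B) :
    x ∈ amalg f J ↔ x.2 - f x.1 ∈ J := Iff.rfl

/-- The natural projection `p_A : A ⋈^f J → A`. -/
def pA (f : A →+* B) (J : Ideal B) : amalg f J →+* A :=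
  (RingHom.fst A B).comp (amalg f J).subtype

/-- The natural projection `p_B : A ⋈^f J → B`. -/
def pB (f : A →+* B) (J : Ideal B) : amalg f J →+* B :=
  (RingHom.snd A B).comp (amalg f J).subtype

/-- For an ideal `P` of `A`, the ideal `P'^f = P ⋈^f J = {(p, f p + j) | p ∈ P, j ∈ J}`
of `A ⋈^f J`. -/
def idealPf (f : A →+* B) (J : Ideal B) (P : Ideal A) : Ideal (amalg f J) :=
  Submodule.copy (Ideal.comap (pA f J) P)
    {x : amalg f J | ∃ p ∈ P, ∃ j ∈ J, (x : A × B) = (p, f p + j)}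
    (by
      ext x
      simp only [Set.mem_setOf_eq, SetLike.mem_coe, Ideal.mem_comap]
      constructor
      · rintro ⟨p, hp, j, hj, hx⟩
        have h1 : pA f J x = p := by
          show (x : A × B).1 = p
          rw [hx]
        rw [h1]; exact hp
      · intro hx
        refine ⟨(x : A × B).1, hx, (x : A × B).2 - f (x : A × B).1,
          (mem_amalg_iff f J _).mp x.2, ?_⟩
        ext <;> simp)

end Amalgamation

/-- For a prime `P` of `A` not containing `f⁻¹(J)`, the localization of `A ⋈^f J` at
`P'^f` is canonically isomorphic to `A_P`, via the map induced by `p_A`. -/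
theorem stmt11 {A B : Type*} [CommRing A] [CommRing B] (f : A →+* B) (J : Ideal B)
    (P : Ideal A) [P.IsPrime] (hP : ¬ Ideal.comap f J ≤ P) [(idealPf f J P).IsPrime] :
    ∃ e : Localization.AtPrime (idealPf f J P) ≃+* Localization.AtPrime P,
      ∀ x : amalg f J,
        e (algebraMap (amalg f J) (Localization.AtPrime (idealPf f J P)) x) =
          algebraMap A (Localization.AtPrime P) (pA f J x) := by
  classical
  obtain ⟨t, htJ, htP⟩ := Set.not_subset.mp hP
  letI : Algebra (amalg f J) (Localization.AtPrime P) :=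
    ((algebraMap A (Localization.AtPrime P)).comp (pA f J)).toAlgebra
  have halg : ∀ x : amalg f J,
      algebraMap (amalg f J) (Localization.AtPrime P) x
        = algebraMap A (Localization.AtPrime P) (pA f J x) := fun x => rfl
  have hmem : ∀ x : amalg f J, x ∈ idealPf f J P ↔ pA f J x ∈ P := by
    intro x
    rw [idealPf, Submodule.copy_eq]
    rfl
  haveI : IsLocalization (idealPf f J P).primeCompl (Localization.AtPrime P) := by
    constructor
    constructor
    · intro ⟨s, hs⟩
      have : pA f J s ∈ P.primeCompl := fun h => hs ((hmem s).mpr h)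
      exact IsLocalization.map_units (M := P.primeCompl) _ ⟨pA f J s, this⟩
    · intro z
      obtain ⟨⟨a, s⟩, hz⟩ := IsLocalization.surj P.primeCompl z
      refine ⟨⟨⟨(a, f a), by simp [mem_amalg_iff]⟩,
        ⟨⟨((s : A), f s), by simp [mem_amalg_iff]⟩,
          fun h => s.2 ((hmem _).mp h)⟩⟩, ?_⟩
      exact hz
    · intro x y h
      rw [halg, halg] at h
      obtain ⟨c, hc⟩ := (IsLocalization.eq_iff_exists P.primeCompl _).mp h
      have hst : (c : A) * t ∈ P.primeCompl := fun h =>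
        ((Ideal.IsPrime.mem_or_mem ‹P.IsPrime› h).elim (fun h => c.2 h) htP)
      have hctm : ((c : A) * t, (0 : B)) ∈ amalg f J := by
        simp only [mem_amalg_iff, map_mul, zero_sub, neg_mem_iff]
        exact J.mul_mem_left _ htJ
      refine ⟨⟨⟨((c : A) * t, 0), hctm⟩, fun h => hst ((hmem _).mp h)⟩, ?_⟩
      ext
      · show (c : A) * t * (x : A × B).1 = (c : A) * t * (y : A × B).1
        have : (c : A) * (x : A × B).1 = (c : A) * (y : A × B).1 := hc
        calc (c : A) * t * (x : A × B).1 = (c : A) * (x : A × B).1 * t := by ring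
        _ = (c : A) * (y : A × B).1 * t := by rw [this]
        _ = (c : A) * t * (y : A × B).1 := by ring
      · show (0 : B) * (x : A × B).2 = (0 : B) * (y : A × B).2
        simp
  exact ⟨(IsLocalization.algEquiv (idealPf f J P).primeCompl
      (Localization.AtPrime (idealPf f J P)) (Localization.AtPrime P)).toRingEquiv,
    fun x =>
      (IsLocalization.algEquiv (idealPf f J P).primeCompl
        (Localization.AtPrime (idealPf f J P)) (Localization.AtPrime P)).commutes x⟩
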